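/- Let γ(z; t) = (i/π)(1/(z − t) + t/(t² + 1)) be the modified Cauchy kernel. For every fixed y > 0 the map t ↦ γ(iy; t) is integrable on ℝ, and its Fourier transform satisfies: for x ≠ 0, ∫ℝ γ(iy; t) e^{ixt} dt = 2·𝟙_{[0,∞)}(x)·e^{−yx} − sign(x)·e^{−|x|}, and for x = 0 the integral equals 1. -/

import Mathlib

open MeasureTheory Complex Set Real Filter

lemma aux_integrableOn_cexp_Ioi {c : ℂ} (hc : c.re < 0) :
    IntegrableOn (fun x : ℝ => Complex.exp (c * x)) (Ioi 0) := by
  have h := exp_neg_integrableOn_Ioi 0 (show 0 < -c.re by linarith)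
  refine h.mono' ?_ ?_
  · exact (Complex.continuous_exp.comp
      (continuous_const.mul Complex.continuous_ofReal)).aestronglyMeasurable
  · filter_upwards with x
    simp [Complex.norm_exp, neg_mul, mul_comm]

lemma aux_tendsto_cexp {c : ℂ} (hc : c.re < 0) :
    Tendsto (fun x : ℝ => c⁻¹ * Complex.exp (c * x)) atTop (nhds 0) := by
  rw [tendsto_zero_iff_norm_tendsto_zero]
  have : (fun x : ℝ => ‖c⁻¹ * Complex.exp (c * x)‖)
      = fun x : ℝ => ‖c⁻¹‖ * Real.exp (c.re * x) := by
    ext x; simp [Complex.norm_exp]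
  rw [this, show (0:ℝ) = ‖c⁻¹‖ * 0 by ring]
  exact (Real.tendsto_exp_atBot.comp
    (Tendsto.const_mul_atTop_of_neg hc tendsto_id)).const_mul _

lemma aux_hasDerivAt_cexp {c : ℂ} (hc : c ≠ 0) (x : ℝ) :
    HasDerivAt (fun x : ℝ => c⁻¹ * Complex.exp (c * x)) (Complex.exp (c * x)) x := by
  have h1 : HasDerivAt (fun z : ℂ => c⁻¹ * Complex.exp (c * z))
      (c⁻¹ * (Complex.exp (c * (x:ℂ)) * (c * 1))) (x : ℂ) :=
    (((hasDerivAt_id (x:ℂ)).const_mul c).cexp).const_mul c⁻¹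
  have h2 := h1.comp_ofReal
  have : c⁻¹ * (Complex.exp (c * (x:ℂ)) * (c * 1)) = Complex.exp (c * x) := by
    field_simp
  rwa [this] at h2

lemma aux_integral_cexp_Ioi {c : ℂ} (hc : c.re < 0) :
    ∫ x : ℝ in Ioi 0, Complex.exp (c * x) = -c⁻¹ := by
  have hc0 : c ≠ 0 := fun h => by simp [h] at hc
  have := integral_Ioi_of_hasDerivAt_of_tendsto
    (f := fun x : ℝ => c⁻¹ * Complex.exp (c * x)) (f' := fun x : ℝ => Complex.exp (c * x))
    (a := 0) (m := 0) ?_ (fun x _ => aux_hasDerivAt_cexp hc0 x)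
    (aux_integrableOn_cexp_Ioi hc) (aux_tendsto_cexp hc)
  · simpa using this
  · exact ((Complex.continuous_exp.comp
      (continuous_const.mul Complex.continuous_ofReal)).const_smul c⁻¹).continuousWithinAt

lemma aux_integrableOn_cexp_Iic' {c : ℂ} (hc : 0 < c.re) :
    IntegrableOn (fun x : ℝ => Complex.exp (c * x)) (Iic 0) := by
  have h_map_neg : ((volume : Measure ℝ).restrict (Ici 0)).map Neg.neg
      = volume.restrict (Iic 0) := by
    conv => rhs; rw [← Measure.map_neg_eq_self (volume : Measure ℝ),
      measurableEmbedding_neg.restrict_map]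
    simp
  rw [IntegrableOn, ← h_map_neg, measurableEmbedding_neg.integrable_map_iff]
  have h : IntegrableOn (fun x : ℝ => Complex.exp (-c * x)) (Ici 0) := by
    rw [integrableOn_Ici_iff_integrableOn_Ioi]
    exact aux_integrableOn_cexp_Ioi (by simpa using hc)
  refine h.congr_fun (fun x _ => ?_) measurableSet_Ici
  simp only [Function.comp]
  push_cast
  ring_nf

lemma aux_integral_cexp_Iic' {c : ℂ} (hc : 0 < c.re) :
    ∫ x : ℝ in Iic 0, Complex.exp (c * x) = c⁻¹ := by
  have h := integral_comp_neg_Ioi (0 : ℝ) (fun x : ℝ => Complex.exp (c * x))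
  simp only [neg_zero] at h
  rw [← h]
  have : ∀ x : ℝ, Complex.exp (c * ↑(-x)) = Complex.exp (-c * x) := by
    intro x; push_cast; ring_nf
  simp_rw [this]
  rw [aux_integral_cexp_Ioi (by simpa using hc), inv_neg, neg_neg]


noncomputable def modCauchyKernel (z : ℂ) (t : ℝ) : ℂ :=
  (Complex.I / (Real.pi : ℂ)) * (1 / (z - (t : ℂ)) + (t : ℂ) / ((t : ℂ) ^ 2 + 1))

lemma aux_ne1 (y t : ℝ) (hy : 0 < y) : Complex.I * y - t ≠ 0 := by
  intro h
  have := congrArg Complex.im h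
  simp at this
  linarith

lemma aux_ne2 (t : ℝ) : ((t:ℂ) ^ 2 + 1) ≠ 0 := by
  intro h
  have := congrArg Complex.re h
  simp [pow_two] at this
  nlinarith

lemma aux_ne3 (y t : ℝ) (hy : 0 < y) : (y:ℂ) + t * Complex.I ≠ 0 := by
  intro h
  have := congrArg Complex.re h
  simp at this
  linarith

lemma aux_ne4 (t : ℝ) : (1:ℂ) + t * Complex.I ≠ 0 := by
  intro h
  have := congrArg Complex.re h
  simp at this

lemma aux_ne5 (t : ℝ) : (1:ℂ) - t * Complex.I ≠ 0 := by
  intro h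
  have := congrArg Complex.re h
  simp at this

lemma kernel_eq (y t : ℝ) (hy : 0 < y) :
    (2 * (Real.pi:ℂ)) * modCauchyKernel (Complex.I * y) t
      = 2 * ((y:ℂ) + t * Complex.I)⁻¹ - (1 + (t:ℂ) * Complex.I)⁻¹
        + (1 - (t:ℂ) * Complex.I)⁻¹ := by
  have hπ : (Real.pi : ℂ) ≠ 0 := by exact_mod_cast Real.pi_ne_zero
  have h1 := aux_ne1 y t hy
  have h2 := aux_ne2 t
  have h3 := aux_ne3 y t hy
  have h4 := aux_ne4 t
  have h5 := aux_ne5 t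
  have h3' : (y:ℂ) + Complex.I * t ≠ 0 := by rwa [mul_comm]
  have h4' : (1:ℂ) + Complex.I * t ≠ 0 := by rwa [mul_comm]
  have h5' : (1:ℂ) - Complex.I * t ≠ 0 := by rwa [mul_comm]
  unfold modCauchyKernel
  field_simp
  ring_nf
  simp only [Complex.I_pow_four, show (Complex.I:ℂ)^5 = Complex.I by
    rw [pow_succ, Complex.I_pow_four, one_mul], Complex.I_sq]
  ring

lemma kernel_eq2 (y t : ℝ) (hy : 0 < y) :
    modCauchyKernel (Complex.I * y) t
      = (Complex.I / (Real.pi:ℂ)) * ((1 + ((t*y:ℝ):ℂ) * Complex.I)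
          / ((Complex.I * y - t) * (((t^2+1 : ℝ)):ℂ))) := by
  have hπ : (Real.pi : ℂ) ≠ 0 := by exact_mod_cast Real.pi_ne_zero
  have h1 := aux_ne1 y t hy
  have h2 := aux_ne2 t
  have h2' : (((t^2+1 : ℝ)):ℂ) ≠ 0 := by push_cast; exact h2
  unfold modCauchyKernel
  rw [div_mul_eq_div_div]
  field_simp
  push_cast
  ring

lemma kernel_bound (y : ℝ) (hy : 0 < y) (t : ℝ) :
    ‖modCauchyKernel (Complex.I * y) t‖ ≤ ((1/y + y)/Real.pi) * (1 + t^2)⁻¹ := by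
  rw [kernel_eq2 y t hy]
  have hπ : ‖((Real.pi : ℝ) : ℂ)‖ = Real.pi := by
    rw [Complex.norm_real, Real.norm_of_nonneg Real.pi_pos.le]
  have hden2 : ‖(((t^2+1 : ℝ)):ℂ)‖ = 1 + t^2 := by
    rw [Complex.norm_real, Real.norm_of_nonneg (by positivity)]; ring
  have hnum : ‖(1 + ((t*y:ℝ):ℂ) * Complex.I)‖ ≤ 1 + |t| * y := by
    calc ‖(1 + ((t*y:ℝ):ℂ) * Complex.I)‖ ≤ ‖(1:ℂ)‖ + ‖((t*y:ℝ):ℂ) * Complex.I‖ :=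
          norm_add_le _ _
      _ = 1 + |t| * y := by
          simp [Complex.norm_real, Real.norm_eq_abs, abs_mul, _root_.abs_of_nonneg hy.le]
  set n := ‖Complex.I * (y:ℂ) - (t:ℂ)‖ with hn
  have hny : y ≤ n := by
    have h := Complex.abs_im_le_norm (Complex.I * (y:ℂ) - (t:ℂ))
    rw [show (Complex.I * (y:ℂ) - (t:ℂ)).im = y by simp] at h
    rw [_root_.abs_of_nonneg hy.le] at h
    exact h
  have hnt : |t| ≤ n := by
    have h := Complex.abs_re_le_norm (Complex.I * (y:ℂ) - (t:ℂ))
    rw [show (Complex.I * (y:ℂ) - (t:ℂ)).re = -t by simp] at h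
    rwa [abs_neg] at h
  have hnpos : 0 < n := lt_of_lt_of_le hy hny
  have key : ‖(1 + ((t*y:ℝ):ℂ) * Complex.I)‖ ≤ (1/y + y) * n := by
    have h1 : 1 ≤ n / y := (one_le_div hy).mpr hny
    have h2 : |t| * y ≤ n * y := mul_le_mul_of_nonneg_right hnt hy.le
    have h3 : n / y = n * (1/y) := by ring
    nlinarith [hnum]
  have hfinal : ‖Complex.I / (Real.pi:ℂ) * ((1 + ((t*y:ℝ):ℂ) * Complex.I)
      / ((Complex.I * y - t) * (((t^2+1 : ℝ)):ℂ)))‖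
      = ‖(1 + ((t*y:ℝ):ℂ) * Complex.I)‖ / (Real.pi * (n * (1 + t^2))) := by
    rw [norm_mul, norm_div, norm_div, norm_mul, hπ, hden2, Complex.norm_I]
    rw [← hn]
    have : Real.pi ≠ 0 := Real.pi_ne_zero
    have h1t : (1:ℝ) + t^2 ≠ 0 := by positivity
    field_simp
  rw [hfinal]
  calc ‖(1 + ((t*y:ℝ):ℂ) * Complex.I)‖ / (Real.pi * (n * (1 + t^2)))
      ≤ ((1/y + y) * n) / (Real.pi * (n * (1 + t^2))) := by
        have hd : 0 < Real.pi * (n * (1 + t^2)) := by positivity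
        exact (div_le_div_iff_of_pos_right hd).mpr key
    _ = ((1/y + y)/Real.pi) * (1 + t^2)⁻¹ := by
        field_simp
lemma kernel_integrable (y : ℝ) (hy : 0 < y) :
    Integrable (fun t : ℝ => modCauchyKernel (Complex.I * y) t) := by
  have hcont : Continuous (fun t : ℝ => modCauchyKernel (Complex.I * y) t) := by
    unfold modCauchyKernel
    apply Continuous.mul continuous_const
    apply Continuous.add
    · exact Continuous.div continuous_const
        (by fun_prop) (fun t => aux_ne1 y t hy)
    · exact Continuous.div (by fun_prop) (by fun_prop) (fun t => aux_ne2 t)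
  refine Integrable.mono' ((integrable_inv_one_add_sq).const_mul ((1/y + y)/Real.pi))
    hcont.aestronglyMeasurable ?_
  filter_upwards with t
  exact kernel_bound y hy t



noncomputable def auxF (y : ℝ) : ℝ → ℂ := fun x =>
  if x ≤ 0 then (Real.exp x : ℂ) else ((2 * Real.exp (-y*x) - Real.exp (-x) : ℝ) : ℂ)

lemma auxF_continuous (y : ℝ) : Continuous (auxF y) := by
  unfold auxF
  apply Continuous.if_le
  · fun_prop
  · fun_prop
  · exact continuous_id
  · exact continuous_const
  · intro x hx
    subst hx
    norm_num

lemma auxF_Iic (y : ℝ) (x : ℝ) (hx : x ∈ Iic (0:ℝ)) :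
    auxF y x = Complex.exp ((1:ℂ) * x) := by
  simp only [auxF, if_pos (mem_Iic.mp hx)]
  rw [one_mul, ← Complex.ofReal_exp]

lemma auxF_Ioi (y : ℝ) (x : ℝ) (hx : x ∈ Ioi (0:ℝ)) :
    auxF y x = 2 * Complex.exp ((-y:ℂ) * x) - Complex.exp ((-1:ℂ) * x) := by
  simp only [auxF, if_neg (not_le.mpr (mem_Ioi.mp hx))]
  push_cast
  ring_nf

lemma auxF_integrableOn_Iic (y : ℝ) : IntegrableOn (auxF y) (Iic 0) := by
  refine (aux_integrableOn_cexp_Iic' (c := 1) (by norm_num)).congr_fun ?_ measurableSet_Iic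
  exact fun x hx => (auxF_Iic y x hx).symm

lemma auxF_integrableOn_Ioi (y : ℝ) (hy : 0 < y) : IntegrableOn (auxF y) (Ioi 0) := by
  have h1 : IntegrableOn (fun x : ℝ => 2 * Complex.exp ((-y:ℂ) * x) - Complex.exp ((-1:ℂ) * x))
      (Ioi 0) := by
    exact ((aux_integrableOn_cexp_Ioi (c := -y) (by simpa using hy)).const_mul 2).sub
      (aux_integrableOn_cexp_Ioi (c := -1) (by norm_num))
  exact h1.congr_fun (fun x hx => (auxF_Ioi y x hx).symm) measurableSet_Ioi

lemma auxF_integrable (y : ℝ) (hy : 0 < y) : Integrable (auxF y) := by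
  rw [← integrableOn_univ, ← Iic_union_Ioi (a := (0:ℝ)), integrableOn_union]
  exact ⟨auxF_integrableOn_Iic y, auxF_integrableOn_Ioi y hy⟩

section Fourier
open scoped FourierTransform

lemma auxF_fourier (y : ℝ) (hy : 0 < y) (w : ℝ) :
    𝓕 (auxF y) w = (2 * (Real.pi:ℂ)) * modCauchyKernel (Complex.I * y) (2 * Real.pi * w) := by
  set C : ℂ := ((2 * Real.pi * w : ℝ) : ℂ) with hC
  have hre1 : ((1:ℂ) - C * Complex.I).re = 1 := by simp [hC]
  have hre2 : (((-y:ℝ):ℂ) - C * Complex.I).re = -y := by simp [hC]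
  have hre3 : ((-1:ℂ) - C * Complex.I).re = -1 := by simp [hC]
  have hIic_eq : ∀ v ∈ Iic (0:ℝ),
      Complex.exp (↑(-2 * Real.pi * v * w) * Complex.I) * auxF y v
        = Complex.exp (((1:ℂ) - C * Complex.I) * v) := by
    intro v hv
    rw [auxF_Iic y v hv, ← Complex.exp_add]
    congr 1
    push_cast [hC]
    ring
  have e1 : ∀ v : ℝ, Complex.exp (↑(-2 * Real.pi * v * w) * Complex.I)
      * Complex.exp ((-y:ℂ) * v) = Complex.exp ((((-y:ℝ):ℂ) - C * Complex.I) * v) := by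
    intro v
    rw [← Complex.exp_add]; congr 1; push_cast [hC]; ring
  have e2 : ∀ v : ℝ, Complex.exp (↑(-2 * Real.pi * v * w) * Complex.I)
      * Complex.exp ((-1:ℂ) * v) = Complex.exp (((-1:ℂ) - C * Complex.I) * v) := by
    intro v
    rw [← Complex.exp_add]; congr 1; push_cast [hC]; ring
  have hIoi_eq : ∀ v ∈ Ioi (0:ℝ),
      Complex.exp (↑(-2 * Real.pi * v * w) * Complex.I) * auxF y v
        = 2 * Complex.exp ((((-y:ℝ):ℂ) - C * Complex.I) * v)
          - Complex.exp (((-1:ℂ) - C * Complex.I) * v) := by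
    intro v hv
    rw [auxF_Ioi y v hv, mul_sub, mul_left_comm, e1, e2]
  have hint1 : IntegrableOn
      (fun v : ℝ => Complex.exp (↑(-2 * Real.pi * v * w) * Complex.I) * auxF y v) (Iic 0) := by
    refine (aux_integrableOn_cexp_Iic' (c := (1:ℂ) - C * Complex.I) (by rw [hre1]; norm_num)).congr_fun
      (fun v hv => (hIic_eq v hv).symm) measurableSet_Iic
  have hint2a : IntegrableOn
      (fun v : ℝ => Complex.exp ((((-y:ℝ):ℂ) - C * Complex.I) * v)) (Ioi 0) :=
    aux_integrableOn_cexp_Ioi (by rw [hre2]; linarith)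
  have hint2b : IntegrableOn
      (fun v : ℝ => Complex.exp (((-1:ℂ) - C * Complex.I) * v)) (Ioi 0) :=
    aux_integrableOn_cexp_Ioi (by rw [hre3]; norm_num)
  have hint2 : IntegrableOn
      (fun v : ℝ => Complex.exp (↑(-2 * Real.pi * v * w) * Complex.I) * auxF y v) (Ioi 0) := by
    refine IntegrableOn.congr_fun ((hint2a.const_mul 2).sub hint2b)
      (fun v hv => (hIoi_eq v hv).symm) measurableSet_Ioi
  rw [Real.fourier_real_eq_integral_exp_smul]
  simp_rw [smul_eq_mul]
  rw [← intervalIntegral.integral_Iic_add_Ioi hint1 hint2]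
  rw [setIntegral_congr_fun measurableSet_Iic hIic_eq,
    setIntegral_congr_fun measurableSet_Ioi hIoi_eq]
  rw [integral_sub (hint2a.const_mul 2) hint2b, MeasureTheory.integral_const_mul]
  rw [aux_integral_cexp_Iic' (by rw [hre1]; norm_num),
    aux_integral_cexp_Ioi (by rw [hre2]; linarith),
    aux_integral_cexp_Ioi (by rw [hre3]; norm_num)]
  rw [kernel_eq y (2 * Real.pi * w) hy, ← hC]
  rw [show (((-y:ℝ):ℂ) - C * Complex.I) = -((y:ℂ) + C * Complex.I) by push_cast; ring,
    show ((-1:ℂ) - C * Complex.I) = -(1 + C * Complex.I) by ring, inv_neg, inv_neg]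
  ring
end Fourier

section Main
open scoped FourierTransform

lemma fourier_auxF_integrable (y : ℝ) (hy : 0 < y) : Integrable (𝓕 (auxF y)) := by
  have heq : 𝓕 (auxF y) = fun w : ℝ =>
      (2 * (Real.pi:ℂ)) * modCauchyKernel (Complex.I * y) (2 * Real.pi * w) :=
    funext (auxF_fourier y hy)
  rw [heq]
  have h2π : (2 * Real.pi : ℝ) ≠ 0 := by positivity
  have h1 : Integrable (fun w : ℝ => modCauchyKernel (Complex.I * y) (2 * Real.pi * w)) :=
    (integrable_comp_mul_left_iff (fun t : ℝ => modCauchyKernel (Complex.I * y) t) h2π).mpr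
      (kernel_integrable y hy)
  exact h1.const_mul _

lemma kernel_inversion (y : ℝ) (hy : 0 < y) (x : ℝ) :
    ∫ t : ℝ, modCauchyKernel (Complex.I * y) t * Complex.exp (Complex.I * x * t)
      = auxF y x := by
  have hinv := (auxF_integrable y hy).fourierInv_fourier_eq (v := x) (fourier_auxF_integrable y hy)
    ((auxF_continuous y).continuousAt)
  rw [Real.fourierInv_eq_fourier_neg,
    Real.fourier_real_eq_integral_exp_smul] at hinv
  simp_rw [smul_eq_mul, auxF_fourier y hy] at hinv
  have hg : ∀ v : ℝ, Complex.exp (↑(-2 * Real.pi * v * -x) * Complex.I)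
        * ((2 * (Real.pi:ℂ)) * modCauchyKernel (Complex.I * y) (2 * Real.pi * v))
      = (2 * (Real.pi:ℂ)) * (Complex.exp (↑((2 * Real.pi * v) * x) * Complex.I)
          * modCauchyKernel (Complex.I * y) (2 * Real.pi * v)) := by
    intro v
    rw [show (-2 * Real.pi * v * -x) = (2 * Real.pi * v) * x by ring]
    ring
  simp_rw [hg] at hinv
  rw [MeasureTheory.integral_const_mul] at hinv
  have hcv := MeasureTheory.Measure.integral_comp_mul_left
    (fun t : ℝ => Complex.exp (↑(t * x) * Complex.I) * modCauchyKernel (Complex.I * y) t)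
    (2 * Real.pi)
  rw [hcv] at hinv
  rw [abs_of_pos (by positivity : (0:ℝ) < (2 * Real.pi)⁻¹)] at hinv
  rw [Complex.real_smul] at hinv
  push_cast at hinv
  rw [← mul_assoc] at hinv
  have hne : (2 * (Real.pi:ℂ)) ≠ 0 := by
    simp [Real.pi_ne_zero]
  rw [mul_inv_cancel₀ hne, one_mul] at hinv
  rw [← hinv]
  apply MeasureTheory.integral_congr_ae
  filter_upwards with t
  rw [mul_comm]
  congr 1
  push_cast
  ring
end Main

/-- For `y > 0`, the modified Cauchy kernel `t ↦ γ(iy; t)` is integrable on `ℝ`, its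
Fourier transform at `x ≠ 0` equals `2·𝟙_{[0,∞)}(x) e^{-yx} - sign(x) e^{-|x|}`, and
at `x = 0` the integral equals `1`. -/
theorem stmt_12 (y : ℝ) (hy : 0 < y) :
    Integrable (fun t : ℝ => modCauchyKernel (Complex.I * y) t) ∧
      (∀ x : ℝ, x ≠ 0 →
        ∫ t : ℝ, modCauchyKernel (Complex.I * y) t * Complex.exp (Complex.I * x * t) =
          (((Ici (0 : ℝ)).indicator (fun x : ℝ => 2 * Real.exp (-y * x)) x
            - Real.sign x * Real.exp (-|x|) : ℝ) : ℂ)) ∧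
      (∫ t : ℝ, modCauchyKernel (Complex.I * y) t * Complex.exp (Complex.I * (0 : ℝ) * t)) = 1 := by
  refine ⟨kernel_integrable y hy, ?_, ?_⟩
  · intro x hx
    rw [kernel_inversion y hy x]
    rcases lt_or_gt_of_ne hx with hneg | hpos
    · rw [indicator_of_notMem (by simpa using not_le.mpr hneg)]
      rw [Real.sign_of_neg hneg, abs_of_neg hneg]
      simp only [auxF, if_pos hneg.le]
      push_cast
      ring_nf
    · rw [indicator_of_mem (by simpa using hpos.le)]
      rw [Real.sign_of_pos hpos, abs_of_pos hpos]
      simp only [auxF, if_neg (not_le.mpr hpos)]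
      push_cast
      ring_nf
  · rw [kernel_inversion y hy 0]
    simp [auxF]
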